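/- Let l_1,...,l_m be i.i.d. indices with P(l = i) = p_i. For any z_1,...,z_n, x-dependent gradients g_1,...,g_n ∈ ℝ^d with g = ∑_i p_i g_i satisfying the dissimilarity bound ∑_i p_i ‖g_i‖² ≤ β²‖g‖² + κ², one has E[‖(1/m)∑_{j=1}^m z_{l_j}‖²] ≤ 3∑_{i=1}^n p_i ‖z_i − g_i‖² + 3‖g‖² + (3/m)(β²‖g‖² + κ²). -/

import Mathlib

open Finset


lemma fedMD_esum_apply {ι : Type*} (s : Finset ι) {d : ℕ} (v : ι → EuclideanSpace ℝ (Fin d))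
    (k : Fin d) : (∑ i ∈ s, v i) k = ∑ i ∈ s, v i k := by
  induction s using Finset.cons_induction with
  | empty => rfl
  | cons a s ha ih => rw [Finset.sum_cons, Finset.sum_cons, ← ih]; rfl

lemma fedMD_norm_sq {d : ℕ} (x : EuclideanSpace ℝ (Fin d)) : ‖x‖ ^ 2 = ∑ k, (x k) ^ 2 := by
  simp [EuclideanSpace.norm_eq, Real.sq_sqrt, Finset.sum_nonneg (fun k _ => sq_nonneg (x k)), sq_abs]

lemma fedMD_jensen {m d : ℕ} (v : Fin m → EuclideanSpace ℝ (Fin d)) :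
    ‖∑ j, v j‖ ^ 2 ≤ (m : ℝ) * ∑ j, ‖v j‖ ^ 2 := by
  have h1 : ‖∑ j, v j‖ ≤ ∑ j, ‖v j‖ := norm_sum_le _ _
  have h2 : (∑ j, ‖v j‖) ^ 2 ≤ (m : ℝ) * ∑ j, ‖v j‖ ^ 2 := by
    have := sq_sum_le_card_mul_sum_sq (s := (univ : Finset (Fin m))) (f := fun j => ‖v j‖)
    simpa using this
  calc ‖∑ j, v j‖ ^ 2 ≤ (∑ j, ‖v j‖) ^ 2 := by
        apply pow_le_pow_left₀ (norm_nonneg _) h1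
    _ ≤ _ := h2
open Finset

lemma marg1 {m n : ℕ} (p : Fin n → ℝ) (hp1 : ∑ i, p i = 1) (j : Fin m) (h : Fin n → ℝ) :
    ∑ l : Fin m → Fin n, (∏ j', p (l j')) * h (l j) = ∑ i, p i * h i := by
  have key : ∀ l : Fin m → Fin n,
      (∏ j', p (l j')) * h (l j) = ∏ j', (p (l j') * (if j' = j then h (l j') else 1)) := by
    intro l
    rw [Finset.prod_mul_distrib, Finset.prod_ite_eq' univ j (fun j' => h (l j'))]
    simp
  rw [Finset.sum_congr rfl (fun l _ => key l),
    (Fintype.prod_sum (fun j' i => p i * (if j' = j then h i else 1))).symm]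
  have : ∀ j' : Fin m, (∑ i, p i * (if j' = j then h i else 1))
      = if j' = j then (∑ i, p i * h i) else 1 := by
    intro j'
    by_cases hj : j' = j <;> simp [hj, hp1]
  rw [Finset.prod_congr rfl (fun j' _ => this j'),
    Finset.prod_ite_eq' univ j (fun _ => ∑ i, p i * h i)]
  simp

lemma marg2 {m n : ℕ} (p : Fin n → ℝ) (hp1 : ∑ i, p i = 1) (j₁ j₂ : Fin m) (hj : j₁ ≠ j₂)
    (h₁ h₂ : Fin n → ℝ) :
    ∑ l : Fin m → Fin n, (∏ j', p (l j')) * (h₁ (l j₁) * h₂ (l j₂))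
      = (∑ i, p i * h₁ i) * (∑ i, p i * h₂ i) := by
  have key : ∀ l : Fin m → Fin n,
      (∏ j', p (l j')) * (h₁ (l j₁) * h₂ (l j₂))
        = ∏ j', (p (l j') * ((if j' = j₁ then h₁ (l j') else 1) *
            (if j' = j₂ then h₂ (l j') else 1))) := by
    intro l
    rw [Finset.prod_mul_distrib, Finset.prod_mul_distrib,
      Finset.prod_ite_eq' univ j₁ (fun j' => h₁ (l j')),
      Finset.prod_ite_eq' univ j₂ (fun j' => h₂ (l j'))]
    simp
  rw [Finset.sum_congr rfl (fun l _ => key l),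
    (Fintype.prod_sum (fun j' i => p i * ((if j' = j₁ then h₁ i else 1) *
      (if j' = j₂ then h₂ i else 1)))).symm]
  have : ∀ j' : Fin m, (∑ i, p i * ((if j' = j₁ then h₁ i else 1) * (if j' = j₂ then h₂ i else 1)))
      = (if j' = j₁ then (∑ i, p i * h₁ i) else 1) * (if j' = j₂ then (∑ i, p i * h₂ i) else 1) := by
    intro j'
    by_cases e1 : j' = j₁
    · subst e1
      simp [Ne.symm, hj, hp1]
    · by_cases e2 : j' = j₂ <;> simp [e1, e2, hp1, Ne.symm hj]
  rw [Finset.prod_congr rfl (fun j' _ => this j'), Finset.prod_mul_distrib,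
    Finset.prod_ite_eq' univ j₁ (fun _ => ∑ i, p i * h₁ i),
    Finset.prod_ite_eq' univ j₂ (fun _ => ∑ i, p i * h₂ i)]
  simp

lemma fedMD_variance {m n d : ℕ} (p : Fin n → ℝ) (hp1 : ∑ i, p i = 1)
    (w : Fin n → EuclideanSpace ℝ (Fin d)) (h0 : ∀ k, ∑ i, p i * w i k = 0) :
    ∑ l : Fin m → Fin n, (∏ j, p (l j)) * ‖∑ j, w (l j)‖ ^ 2
      = (m : ℝ) * ∑ i, p i * ‖w i‖ ^ 2 := by
  calc ∑ l : Fin m → Fin n, (∏ j, p (l j)) * ‖∑ j, w (l j)‖ ^ 2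
      = ∑ l : Fin m → Fin n, ∑ k, ∑ j₁, ∑ j₂, (∏ j, p (l j)) * (w (l j₁) k * w (l j₂) k) := by
        refine Finset.sum_congr rfl fun l _ => ?_
        rw [fedMD_norm_sq, Finset.mul_sum]
        refine Finset.sum_congr rfl fun k _ => ?_
        rw [fedMD_esum_apply, sq, Finset.sum_mul_sum, Finset.mul_sum]
        exact Finset.sum_congr rfl fun j₁ _ => by rw [Finset.mul_sum]
    _ = ∑ k, ∑ j₁, ∑ j₂, ∑ l : Fin m → Fin n, (∏ j, p (l j)) * (w (l j₁) k * w (l j₂) k) := by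
        rw [Finset.sum_comm]
        refine Finset.sum_congr rfl fun k _ => ?_
        rw [Finset.sum_comm]
        refine Finset.sum_congr rfl fun j₁ _ => ?_
        rw [Finset.sum_comm]
    _ = ∑ k, ∑ j₁ : Fin m, ∑ j₂ : Fin m, (if j₂ = j₁ then ∑ i, p i * (w i k * w i k) else 0) := by
        refine Finset.sum_congr rfl fun k _ => Finset.sum_congr rfl fun j₁ _ =>
          Finset.sum_congr rfl fun j₂ _ => ?_
        by_cases hj : j₂ = j₁
        · subst hj
          rw [if_pos rfl]
          exact marg1 p hp1 j₂ (fun i => w i k * w i k)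
        · rw [if_neg hj, marg2 p hp1 j₁ j₂ (fun h => hj h.symm) (fun i => w i k) (fun i => w i k),
            h0 k, mul_zero]
    _ = ∑ k, (m : ℝ) * ∑ i, p i * (w i k * w i k) := by
        refine Finset.sum_congr rfl fun k _ => ?_
        rw [Finset.sum_congr rfl fun j₁ _ => Finset.sum_ite_eq' univ j₁
          (fun _ => ∑ i, p i * (w i k * w i k))]
        simp [mul_comm]
    _ = (m : ℝ) * ∑ i, p i * ‖w i‖ ^ 2 := by
        rw [← Finset.mul_sum, Finset.sum_comm]
        congr 1
        refine Finset.sum_congr rfl fun i _ => ?_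
        rw [← Finset.mul_sum, fedMD_norm_sq]
        simp [sq]

/-- Lemma 1 (FedNova) for MD sampling: second-moment bound on the aggregated update.
The expectation over the m i.i.d. sampled indices is written as a sum over all index
tuples weighted by their product probability. -/
theorem md_sampling_second_moment (n m d : ℕ) (hm : 0 < m)
    (p : Fin n → ℝ) (hp0 : ∀ i, 0 ≤ p i) (hp1 : ∑ i, p i = 1)
    (z g : Fin n → EuclideanSpace ℝ (Fin d))
    (gbar : EuclideanSpace ℝ (Fin d)) (hgbar : gbar = ∑ i, p i • g i)
    (β κ : ℝ) (hβ : 1 ≤ β ^ 2) (hκ : 0 ≤ κ)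
    (hdiss : ∑ i, p i * ‖g i‖ ^ 2 ≤ β ^ 2 * ‖gbar‖ ^ 2 + κ ^ 2) :
    ∑ l : Fin m → Fin n, (∏ j, p (l j)) * ‖(1 / (m : ℝ)) • ∑ j, z (l j)‖ ^ 2 ≤
      3 * (∑ i, p i * ‖z i - g i‖ ^ 2) + 3 * ‖gbar‖ ^ 2 +
        (3 / (m : ℝ)) * (β ^ 2 * ‖gbar‖ ^ 2 + κ ^ 2) := by
  have hm' : (0 : ℝ) < m := by exact_mod_cast hm
  have hmne : (m : ℝ) ≠ 0 := ne_of_gt hm'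
  set P : (Fin m → Fin n) → ℝ := fun l => ∏ j, p (l j) with hP
  have hP0 : ∀ l, 0 ≤ P l := fun l => Finset.prod_nonneg fun j _ => hp0 (l j)
  have hPsum : (∑ l : Fin m → Fin n, P l) = 1 := by
    rw [show (∑ l : Fin m → Fin n, P l) = ∏ j : Fin m, ∑ i, p i from
      (Fintype.prod_sum fun _ i => p i).symm]
    simp [hp1]
  set A : (Fin m → Fin n) → EuclideanSpace ℝ (Fin d) :=
    fun l => (1 / (m : ℝ)) • ∑ j, (z (l j) - g (l j)) with hA
  set B : (Fin m → Fin n) → EuclideanSpace ℝ (Fin d) :=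
    fun l => (1 / (m : ℝ)) • ∑ j, (g (l j) - gbar) with hB
  -- decomposition
  have hdecomp : ∀ l, (1 / (m : ℝ)) • ∑ j, z (l j) = A l + B l + gbar := by
    intro l
    have h1 : A l + B l = (1 / (m : ℝ)) • ∑ j, (z (l j) - gbar) := by
      rw [hA, hB, ← smul_add, ← Finset.sum_add_distrib]
      congr 1
      exact Finset.sum_congr rfl fun j _ => by abel
    have h2 : ∑ j : Fin m, (z (l j) - gbar) = (∑ j, z (l j)) - (m : ℝ) • gbar := by
      rw [Finset.sum_sub_distrib, Finset.sum_const, card_univ, Fintype.card_fin,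
        ← Nat.cast_smul_eq_nsmul ℝ]
    rw [h1, h2, smul_sub, smul_smul, one_div_mul_cancel hmne, one_smul, sub_add_cancel]
  -- pointwise three-term bound
  have hpt : ∀ l, ‖(1 / (m : ℝ)) • ∑ j, z (l j)‖ ^ 2
      ≤ 3 * ‖A l‖ ^ 2 + 3 * ‖B l‖ ^ 2 + 3 * ‖gbar‖ ^ 2 := by
    intro l
    rw [hdecomp l]
    have h := norm_add₃_le (a := A l) (b := B l) (c := gbar)
    have h2 : ‖A l + B l + gbar‖ ^ 2 ≤ (‖A l‖ + ‖B l‖ + ‖gbar‖) ^ 2 :=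
      pow_le_pow_left₀ (norm_nonneg _) h 2
    nlinarith [sq_nonneg (‖A l‖ - ‖B l‖), sq_nonneg (‖A l‖ - ‖gbar‖),
      sq_nonneg (‖B l‖ - ‖gbar‖)]
  -- term A bound
  have hAterm : ∑ l : Fin m → Fin n, P l * ‖A l‖ ^ 2 ≤ ∑ i, p i * ‖z i - g i‖ ^ 2 := by
    have hptA : ∀ l, ‖A l‖ ^ 2 ≤ (1 / (m : ℝ)) * ∑ j, ‖z (l j) - g (l j)‖ ^ 2 := by
      intro l
      have hj := fedMD_jensen (fun j => z (l j) - g (l j))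
      rw [hA]
      rw [norm_smul, mul_pow]
      have : ‖(1 / (m : ℝ))‖ ^ 2 = 1 / (m : ℝ) ^ 2 := by
        rw [Real.norm_eq_abs, abs_of_pos (by positivity)]
        ring
      rw [this]
      calc 1 / (m : ℝ) ^ 2 * ‖∑ j, (z (l j) - g (l j))‖ ^ 2
          ≤ 1 / (m : ℝ) ^ 2 * ((m : ℝ) * ∑ j, ‖z (l j) - g (l j)‖ ^ 2) := by
            apply mul_le_mul_of_nonneg_left hj (by positivity)
        _ = (1 / (m : ℝ)) * ∑ j, ‖z (l j) - g (l j)‖ ^ 2 := by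
            field_simp
    calc ∑ l : Fin m → Fin n, P l * ‖A l‖ ^ 2
        ≤ ∑ l : Fin m → Fin n, P l * ((1 / (m : ℝ)) * ∑ j, ‖z (l j) - g (l j)‖ ^ 2) :=
          Finset.sum_le_sum fun l _ => mul_le_mul_of_nonneg_left (hptA l) (hP0 l)
      _ = ∑ l : Fin m → Fin n, ∑ j : Fin m, (1 / (m : ℝ)) * (P l * ‖z (l j) - g (l j)‖ ^ 2) := by
          refine Finset.sum_congr rfl fun l _ => ?_
          rw [mul_left_comm, Finset.mul_sum, Finset.mul_sum]
      _ = (1 / (m : ℝ)) * ∑ j : Fin m, ∑ l : Fin m → Fin n, P l * ‖z (l j) - g (l j)‖ ^ 2 := by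
          rw [Finset.sum_comm, Finset.mul_sum]
          exact Finset.sum_congr rfl fun j _ => (Finset.mul_sum _ _ _).symm
      _ = (1 / (m : ℝ)) * ∑ j : Fin m, ∑ i, p i * ‖z i - g i‖ ^ 2 := by
          congr 1
          exact Finset.sum_congr rfl fun j _ => marg1 p hp1 j (fun i => ‖z i - g i‖ ^ 2)
      _ = ∑ i, p i * ‖z i - g i‖ ^ 2 := by
          rw [Finset.sum_const, card_univ, Fintype.card_fin, nsmul_eq_mul]
          field_simp
  -- coordinatewise mean-zero for g - gbar
  have h0 : ∀ k, ∑ i, p i * (g i - gbar) k = 0 := by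
    intro k
    have hg : gbar k = ∑ i, p i * g i k := by
      rw [hgbar, fedMD_esum_apply]
      exact Finset.sum_congr rfl fun i _ => rfl
    have : ∀ i, p i * (g i - gbar) k = p i * g i k - p i * gbar k := by
      intro i
      have : (g i - gbar) k = g i k - gbar k := rfl
      rw [this]; ring
    rw [Finset.sum_congr rfl fun i _ => this i, Finset.sum_sub_distrib, ← Finset.sum_mul,
      hp1, one_mul, hg]
    exact sub_self _
  -- second-moment identity for ∑ p ‖g - gbar‖²
  have hsub : ∑ i, p i * ‖g i - gbar‖ ^ 2 = (∑ i, p i * ‖g i‖ ^ 2) - ‖gbar‖ ^ 2 := by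
    have hinner : ∑ i, p i * (inner ℝ (g i) gbar : ℝ) = ‖gbar‖ ^ 2 := by
      have : ∑ i, p i * (inner ℝ (g i) gbar : ℝ) = (inner ℝ (∑ i, p i • g i) gbar : ℝ) := by
        rw [sum_inner]
        exact Finset.sum_congr rfl fun i _ => (real_inner_smul_left _ _ _).symm
      rw [this, ← hgbar, real_inner_self_eq_norm_sq]
    have hexp : ∀ i, ‖g i - gbar‖ ^ 2 = ‖g i‖ ^ 2 - 2 * (inner ℝ (g i) gbar : ℝ) + ‖gbar‖ ^ 2 :=
      fun i => norm_sub_sq_real _ _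
    calc ∑ i, p i * ‖g i - gbar‖ ^ 2
        = ∑ i, (p i * ‖g i‖ ^ 2 - 2 * (p i * (inner ℝ (g i) gbar : ℝ)) + p i * ‖gbar‖ ^ 2) := by
          refine Finset.sum_congr rfl fun i _ => ?_
          rw [hexp i]; ring
      _ = (∑ i, p i * ‖g i‖ ^ 2) - 2 * (∑ i, p i * (inner ℝ (g i) gbar : ℝ))
            + (∑ i, p i) * ‖gbar‖ ^ 2 := by
          rw [Finset.sum_add_distrib, Finset.sum_sub_distrib, ← Finset.mul_sum, ← Finset.sum_mul]
      _ = (∑ i, p i * ‖g i‖ ^ 2) - ‖gbar‖ ^ 2 := by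
          rw [hinner, hp1]; ring
  -- term B
  have hBterm : ∑ l : Fin m → Fin n, P l * ‖B l‖ ^ 2
      ≤ (1 / (m : ℝ)) * (β ^ 2 * ‖gbar‖ ^ 2 + κ ^ 2) := by
    have hvar := fedMD_variance (m := m) p hp1 (fun i => g i - gbar) h0
    have hBval : ∀ l : Fin m → Fin n, ‖B l‖ ^ 2
        = (1 / (m : ℝ) ^ 2) * ‖∑ j, (g (l j) - gbar)‖ ^ 2 := by
      intro l
      rw [hB, norm_smul, mul_pow, Real.norm_eq_abs, abs_of_pos (by positivity)]
      ring
    calc ∑ l : Fin m → Fin n, P l * ‖B l‖ ^ 2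
        = (1 / (m : ℝ) ^ 2) * ∑ l : Fin m → Fin n, P l * ‖∑ j, (g (l j) - gbar)‖ ^ 2 := by
          rw [Finset.mul_sum]
          exact Finset.sum_congr rfl fun l _ => by rw [hBval l]; ring
      _ = (1 / (m : ℝ) ^ 2) * ((m : ℝ) * ∑ i, p i * ‖g i - gbar‖ ^ 2) := by rw [hvar]
      _ = (1 / (m : ℝ)) * ∑ i, p i * ‖g i - gbar‖ ^ 2 := by field_simp
      _ ≤ (1 / (m : ℝ)) * (β ^ 2 * ‖gbar‖ ^ 2 + κ ^ 2) := by
          apply mul_le_mul_of_nonneg_left _ (by positivity)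
          rw [hsub]
          nlinarith [sq_nonneg ‖gbar‖]
  -- assemble
  calc ∑ l : Fin m → Fin n, P l * ‖(1 / (m : ℝ)) • ∑ j, z (l j)‖ ^ 2
      ≤ ∑ l : Fin m → Fin n, P l * (3 * ‖A l‖ ^ 2 + 3 * ‖B l‖ ^ 2 + 3 * ‖gbar‖ ^ 2) :=
        Finset.sum_le_sum fun l _ => mul_le_mul_of_nonneg_left (hpt l) (hP0 l)
    _ = 3 * (∑ l : Fin m → Fin n, P l * ‖A l‖ ^ 2)
        + 3 * (∑ l : Fin m → Fin n, P l * ‖B l‖ ^ 2)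
        + 3 * ‖gbar‖ ^ 2 * (∑ l : Fin m → Fin n, P l) := by
        have hsplit : ∀ l, P l * (3 * ‖A l‖ ^ 2 + 3 * ‖B l‖ ^ 2 + 3 * ‖gbar‖ ^ 2)
            = 3 * (P l * ‖A l‖ ^ 2) + 3 * (P l * ‖B l‖ ^ 2) + 3 * ‖gbar‖ ^ 2 * P l :=
          fun l => by ring
        rw [Finset.sum_congr rfl fun l _ => hsplit l, Finset.sum_add_distrib,
          Finset.sum_add_distrib, ← Finset.mul_sum, ← Finset.mul_sum, ← Finset.mul_sum]
    _ ≤ 3 * (∑ i, p i * ‖z i - g i‖ ^ 2) + 3 * ((1 / (m : ℝ)) * (β ^ 2 * ‖gbar‖ ^ 2 + κ ^ 2))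
        + 3 * ‖gbar‖ ^ 2 := by
        rw [hPsum, mul_one]
        have := hAterm
        have := hBterm
        linarith
    _ = 3 * (∑ i, p i * ‖z i - g i‖ ^ 2) + 3 * ‖gbar‖ ^ 2
        + (3 / (m : ℝ)) * (β ^ 2 * ‖gbar‖ ^ 2 + κ ^ 2) := by ring
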